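/- Let p > 2 be a real number. There exists a positive integer n₁ such that for all n > n₁ the following holds: for all real numbers α_1,…,α_n with 1/(2n) ≤ α_i ≤ (n+1)/(2n) for all i and ∑_{i=1}^n α_i = 1, and all u_1,…,u_n ∈ [0,1] with u_i ≤ c₁·n^{−1/p}·α_i^{−1/p} for all i, if the number of indices i with u_i > 1/2 is strictly greater than n/2, then φ(u_1,…,u_n) > 1. -/

import Mathlib

open Real



/-- The function φ: the average over all sign choices ε ∈ {−1,+1}ⁿ (encoded by
`ε : Fin n → Bool`, with `true ↦ +1`, `false ↦ −1`) of
`(∑ i, α i * (1 + ε i * u i) ^ p / (1 + u i ^ p)) ^ (1/p)`. -/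
noncomputable def phi (p : ℝ) {n : ℕ} (α u : Fin n → ℝ) : ℝ :=
  (2:ℝ) ^ (-(n : ℝ)) * ∑ ε : Fin n → Bool,
    (∑ i, α i * (1 + (if ε i then (1:ℝ) else -1) * u i) ^ p / (1 + u i ^ p)) ^ (1 / p)


lemma bern2 {p u : ℝ} (hp : 2 ≤ p) (hu0 : -1 ≤ u) (hu1 : u ≤ 1) :
    1 + p*u + p/2*u^2 ≤ (1+u) ^ p := by
  have hx : (0:ℝ) ≤ 1 + u := by linarith
  have hz : -1 ≤ 2*u + u^2 := by nlinarith
  have hq : 1 ≤ p/2 := by linarith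
  have hb := one_add_mul_self_le_rpow_one_add hz hq
  have h1 : (1 + (2*u+u^2)) = (1+u)^(2:ℕ) := by ring
  have h2 : ((1+u)^(2:ℕ) : ℝ) ^ (p/2) = (1+u)^p := by
    rw [← Real.rpow_natCast (1+u) 2, ← Real.rpow_mul hx]
    norm_num
    rw [show 2 * (p / 2) = p by ring]
  calc 1 + p*u + p/2*u^2 = 1 + (p/2) * (2*u+u^2) := by ring
    _ ≤ (1 + (2*u+u^2)) ^ (p/2) := hb
    _ = (1+u)^p := by rw [h1, h2]

lemma upow_le_usq {p u : ℝ} (hp : 2 ≤ p) (h0 : 0 ≤ u) (h1 : u ≤ 1) :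
    u ^ p ≤ u ^ 2 := by
  rcases eq_or_lt_of_le h0 with h | h
  · rw [← h, Real.zero_rpow (by linarith)]; positivity
  · calc u ^ p ≤ u ^ (2:ℝ) := Real.rpow_le_rpow_of_exponent_ge h h1 hp
      _ = u ^ (2:ℕ) := by rw [← Real.rpow_natCast u 2]; norm_num

lemma mean_lower {p u : ℝ} (hp : 2 ≤ p) (h0 : 0 ≤ u) (h1 : u ≤ 1) :
    1 + (p-2)*u^2/4 ≤ ((1+u)^p + (1-u)^p) / (2*(1+u^p)) := by
  have hs : u ^ p ≤ u ^ 2 := upow_le_usq hp h0 h1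
  have hs0 : 0 ≤ u ^ p := Real.rpow_nonneg h0 p
  have hu2 : u ^ 2 ≤ 1 := by nlinarith
  have hd : (0:ℝ) < 2*(1+u^p) := by linarith
  rw [le_div_iff₀ hd]
  have b1 : 1 + p*u + p/2*u^2 ≤ (1+u)^p := bern2 hp (by linarith) h1
  have b2 : 1 + p*(-u) + p/2*(-u)^2 ≤ (1+(-u))^p := bern2 hp (by linarith) (by linarith)
  have b2' : 1 - p*u + p/2*u^2 ≤ (1-u)^p := by
    have : (1:ℝ) + -u = 1 - u := by ring
    rw [this] at b2; nlinarith [b2]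
  nlinarith [b1, b2', hs, mul_nonneg (mul_nonneg (by linarith : (0:ℝ) ≤ p-2) (sq_nonneg u)) (by linarith : (0:ℝ) ≤ 1 - u^p)]

lemma diff_upper {p u : ℝ} (hp : 2 ≤ p) (h0 : 0 ≤ u) (h1 : u ≤ 1) :
    ((1+u)^p - (1-u)^p) / (2*(1+u^p)) ≤ (2^p - 1 + p) * u := by
  have hs0 : 0 ≤ u ^ p := Real.rpow_nonneg h0 p
  have hd : (0:ℝ) < 2*(1+u^p) := by linarith
  have hdiff0 : (0:ℝ) ≤ (1+u)^p - (1-u)^p := by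
    have := Real.rpow_le_rpow (by linarith : (0:ℝ) ≤ 1-u) (by linarith : 1-u ≤ 1+u) (by linarith : 0 ≤ p)
    linarith
  have hub : (1+u)^p ≤ 1 + (2^p - 1)*u := by
    have hc := (convexOn_rpow (by linarith : (1:ℝ) ≤ p)).2
      (Set.mem_Ici.2 (by norm_num : (0:ℝ) ≤ 1)) (Set.mem_Ici.2 (by norm_num : (0:ℝ) ≤ 2))
      (by linarith : (0:ℝ) ≤ 1 - u) h0 (by ring : (1-u) + u = 1)
    simp only [smul_eq_mul] at hc
    have he : (1-u) * 1 + u * 2 = 1 + u := by ring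
    rw [he] at hc
    have h1p : (1:ℝ)^p = 1 := Real.one_rpow p
    rw [h1p] at hc
    linarith
  have hlb : 1 - p*u ≤ (1-u)^p := by
    have b2 : 1 + p*(-u) + p/2*(-u)^2 ≤ (1+(-u))^p := bern2 hp (by linarith) (by linarith)
    have h2 : (1:ℝ) + -u = 1 - u := by rw [← sub_eq_add_neg]
    rw [h2] at b2; nlinarith [b2]
  have hnum : (1+u)^p - (1-u)^p ≤ (2^p - 1 + p) * u := by linarith
  have h2p : (1:ℝ) ≤ 2^p := Real.one_le_rpow (by norm_num) (by linarith)
  rw [div_le_iff₀ hd]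
  have hK0 : (0:ℝ) ≤ 2^p - 1 + p := by linarith
  nlinarith [hnum, mul_nonneg hK0 h0, mul_nonneg (mul_nonneg hK0 h0) hs0]

noncomputable def chi (b : Bool) : ℝ := if b then 1 else -1

lemma cross_zero {n : ℕ} {i j : Fin n} (hij : i ≠ j) :
    ∑ ε : Fin n → Bool, chi (ε i) * chi (ε j) = 0 := by
  classical
  set e : (Fin n → Bool) → (Fin n → Bool) := fun ε => Function.update ε i (!(ε i)) with he
  have hinv : Function.Involutive e := by
    intro ε; funext k
    by_cases hk : k = i
    · subst hk; simp [e]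
    · simp [e, Function.update_of_ne hk]
  have hsum : ∑ ε : Fin n → Bool, chi ((e ε) i) * chi ((e ε) j)
      = ∑ ε : Fin n → Bool, chi (ε i) * chi (ε j) :=
    Function.Bijective.sum_comp hinv.bijective (fun ε => chi (ε i) * chi (ε j))
  have hterm : ∀ ε : Fin n → Bool, chi ((e ε) i) * chi ((e ε) j) = -(chi (ε i) * chi (ε j)) := by
    intro ε
    have h1 : (e ε) i = !(ε i) := by simp [e]
    have h2 : (e ε) j = ε j := Function.update_of_ne hij.symm _ _
    rw [h1, h2]
    cases ε i <;> cases ε j <;> simp [chi]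
  rw [Finset.sum_congr rfl (fun ε _ => hterm ε), Finset.sum_neg_distrib] at hsum
  linarith

lemma sum_sq_signs {n : ℕ} (a : Fin n → ℝ) :
    ∑ ε : Fin n → Bool, (∑ i, chi (ε i) * a i)^2 = 2^n * ∑ i, (a i)^2 := by
  classical
  have expand : ∀ ε : Fin n → Bool, (∑ i, chi (ε i) * a i)^2
      = ∑ i, ∑ j, (chi (ε i) * chi (ε j)) * (a i * a j) := by
    intro ε
    rw [sq, Finset.sum_mul_sum]
    exact Finset.sum_congr rfl fun i _ => Finset.sum_congr rfl fun j _ => by ring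
  rw [Finset.sum_congr rfl fun ε _ => expand ε]
  rw [Finset.sum_comm]
  have step : ∀ i : Fin n, (∑ ε : Fin n → Bool, ∑ j, (chi (ε i) * chi (ε j)) * (a i * a j))
      = 2^n * (a i)^2 := by
    intro i
    rw [Finset.sum_comm]
    have inner : ∀ j : Fin n, (∑ ε : Fin n → Bool, (chi (ε i) * chi (ε j)) * (a i * a j))
        = (if j = i then (2:ℝ)^n * (a i)^2 else 0) := by
      intro j
      rw [← Finset.sum_mul]
      by_cases hj : j = i
      · subst hj
        have hone : ∀ ε : Fin n → Bool, chi (ε j) * chi (ε j) = 1 := by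
          intro ε; cases ε j <;> simp [chi]
        rw [Finset.sum_congr rfl fun ε _ => hone ε]
        simp [Finset.card_univ, Fintype.card_fun, sq]
      · rw [cross_zero (Ne.symm hj)]
        simp [hj]
    rw [Finset.sum_congr rfl fun j _ => inner j]
    simp
  rw [Finset.sum_congr rfl fun i _ => step i, ← Finset.mul_sum]

lemma term_split (p : ℝ) {x u d : ℝ} (hd : 0 < d) (b : Bool) :
    x * (1 + (if b then (1:ℝ) else -1) * u) ^ p / d
      = x * (((1+u)^p + (1-u)^p) / (2*d)) + chi b * (x * (((1+u)^p - (1-u)^p) / (2*d))) := by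
  have hd' : d ≠ 0 := ne_of_gt hd
  cases b
  · simp only [chi, if_false, Bool.false_eq_true]
    rw [show (1:ℝ) + (-1) * u = 1 - u by ring]
    field_simp
    ring
  · simp only [chi, if_true]
    rw [show (1:ℝ) + 1 * u = 1 + u by ring]
    field_simp
    ring

set_option maxHeartbeats 1000000 in
theorem stmt_7 (p : ℝ) (hp : 2 < p) :
    ∃ n₁ : ℕ, 0 < n₁ ∧ ∀ n : ℕ, n₁ < n → ∀ α u : Fin n → ℝ,
      (∀ i, 1 / (2 * (n : ℝ)) ≤ α i) → (∀ i, α i ≤ ((n : ℝ) + 1) / (2 * n)) →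
      ∑ i, α i = 1 →
      (∀ i, u i ∈ Set.Icc (0 : ℝ) 1) →
      (∀ i, u i ≤ max ((2:ℝ) ^ (1 - 1 / p)) (1 / (2 - (2:ℝ) ^ (1 / p))) *
        (n : ℝ) ^ (-(1 / p)) * (α i) ^ (-(1 / p))) →
      (n : ℝ) / 2 < (Finset.univ.filter fun i => 1 / 2 < u i).card →
      1 < phi p α u := by
  classical
  have hp0 : (0:ℝ) < p := by linarith
  have hip : 0 < 1/p := by positivity
  have hip1 : 1/p ≤ 1/2 := by
    rw [div_le_div_iff₀ hp0 (by norm_num)]; linarith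
  set c : ℝ := max ((2:ℝ) ^ (1 - 1 / p)) (1 / (2 - (2:ℝ) ^ (1 / p))) with hc
  have hc0 : 0 < c := lt_of_lt_of_le (Real.rpow_pos_of_pos (by norm_num) _) (le_max_left _ _)
  set K : ℝ := 2^p - 1 + p with hK
  have hK0 : 0 < K := by
    have : (1:ℝ) ≤ 2^p := Real.one_le_rpow (by norm_num) (by linarith)
    simp only [hK]; linarith
  set θ : ℝ := (p-2)/64 with hθdef
  have hθ : 0 < θ := by simp only [hθdef]; linarith
  set L : ℝ := (1 + θ/2) ^ (1/p) with hL
  have hL1 : 1 < L := by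
    rw [hL]
    rw [Real.one_lt_rpow_iff_of_pos (by linarith)]
    exact Or.inl ⟨by linarith, hip⟩
  have hL0 : 0 < L := by linarith
  set η : ℝ := 1 - 1/L with hη
  have hη0 : 0 < η := by
    have : 1/L < 1 := by rw [div_lt_one hL0]; exact hL1
    simp only [hη]; linarith
  set D : ℝ := 4*K^2*c/θ^2 with hD
  have hD0 : 0 < D := by positivity
  refine ⟨⌈(D/η)^p⌉₊ + 1, Nat.succ_pos _, ?_⟩
  intro n hn α u hα1 hα2 hsum hu hub hcard
  have hn1 : 1 ≤ n := by omega
  have hn0 : (0:ℝ) < n := Nat.cast_pos.mpr (by omega)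
  -- the key smallness of X := n ^ (-(1/p))
  set X : ℝ := (n:ℝ) ^ (-(1/p)) with hX
  have hX0 : 0 < X := Real.rpow_pos_of_pos hn0 _
  have hDX : D * X < η := by
    have h1 : (D/η)^p < (n:ℝ) := by
      have h2 : ((⌈(D/η)^p⌉₊ : ℝ)) + 1 < (n:ℝ) := by exact_mod_cast hn
      have h3 : (D/η)^p ≤ (⌈(D/η)^p⌉₊ : ℝ) := Nat.le_ceil _
      linarith
    have hDη : 0 ≤ D/η := le_of_lt (by positivity)
    have h4 : ((D/η)^p)^(1/p) < (n:ℝ)^(1/p) :=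
      Real.rpow_lt_rpow (Real.rpow_nonneg hDη p) h1 hip
    have h5 : ((D/η)^p)^(1/p) = D/η := by
      rw [← Real.rpow_mul hDη, mul_one_div, div_self (ne_of_gt hp0), Real.rpow_one]
    rw [h5] at h4
    have h6 : X = ((n:ℝ)^(1/p))⁻¹ := by
      rw [hX, ← Real.rpow_neg_one ((n:ℝ)^(1/p)), ← Real.rpow_mul (le_of_lt hn0)]
      norm_num
    have h7 : 0 < (n:ℝ)^(1/p) := Real.rpow_pos_of_pos hn0 _
    rw [h6]
    rw [div_lt_iff₀ hη0] at h4
    rw [mul_inv_lt_iff₀' h7]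
    nlinarith [h4]
  -- basic facts
  have hα0 : ∀ i, 0 < α i := fun i => lt_of_lt_of_le (by positivity) (hα1 i)
  have hαle1 : ∀ i, α i ≤ 1 := by
    intro i
    refine le_trans (hα2 i) ?_
    rw [div_le_one (by positivity)]
    have : (1:ℝ) ≤ n := by exact_mod_cast hn1
    linarith
  have hu0 : ∀ i, 0 ≤ u i := fun i => (hu i).1
  have hu1 : ∀ i, u i ≤ 1 := fun i => (hu i).2
  have hden : ∀ i, (0:ℝ) < 1 + u i ^ p := fun i => by
    have := Real.rpow_nonneg (hu0 i) p; linarith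
  set m : Fin n → ℝ := fun i => α i * (((1+u i)^p + (1-u i)^p) / (2*(1+u i^p))) with hm
  set a : Fin n → ℝ := fun i => α i * (((1+u i)^p - (1-u i)^p) / (2*(1+u i^p))) with ha
  set S : (Fin n → Bool) → ℝ := fun ε => ∑ i, chi (ε i) * a i with hS
  set M : ℝ := ∑ i, m i with hM
  -- decomposition
  have hdecomp : ∀ ε : Fin n → Bool,
      (∑ i, α i * (1 + (if ε i then (1:ℝ) else -1) * u i) ^ p / (1 + u i ^ p)) = M + S ε := by
    intro ε
    have hterm : ∀ i, α i * (1 + (if ε i then (1:ℝ) else -1) * u i) ^ p / (1 + u i ^ p)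
        = m i + chi (ε i) * a i := by
      intro i
      simp only [hm, ha]
      exact term_split p (hden i) (ε i)
    rw [Finset.sum_congr rfl fun i _ => hterm i, Finset.sum_add_distrib, hM, hS]
  -- lower bound on M
  have hMlb : 1 + θ < M := by
    have hmge : ∀ i, α i * (1 + (p-2)*(u i)^2/4) ≤ m i := by
      intro i
      exact mul_le_mul_of_nonneg_left (mean_lower (le_of_lt hp) (hu0 i) (hu1 i)) (le_of_lt (hα0 i))
    have hMge : 1 + (p-2)/4 * (∑ i, α i * (u i)^2) ≤ M := by
      have e1 : ∀ i, α i * (1 + (p-2)*(u i)^2/4) = α i + (p-2)/4 * (α i * (u i)^2) := by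
        intro i; ring
      calc 1 + (p-2)/4 * (∑ i, α i * (u i)^2)
          = ∑ i, (α i + (p-2)/4 * (α i * (u i)^2)) := by
            rw [Finset.sum_add_distrib, hsum, ← Finset.mul_sum]
        _ = ∑ i, α i * (1 + (p-2)*(u i)^2/4) := by
            exact Finset.sum_congr rfl fun i _ => (e1 i).symm
        _ ≤ ∑ i, m i := Finset.sum_le_sum fun i _ => hmge i
    have hT : 1/16 < ∑ i, α i * (u i)^2 := by
      set Big := (Finset.univ.filter fun i => 1/2 < u i) with hBig
      have h1 : ∀ i ∈ Big, 1/(2*(n:ℝ)) * (1/4) ≤ α i * (u i)^2 := by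
        intro i hi
        rw [hBig, Finset.mem_filter] at hi
        have hui : 1/2 < u i := hi.2
        have : (1:ℝ)/4 ≤ (u i)^2 := by nlinarith
        exact mul_le_mul (hα1 i) this (by norm_num) (le_of_lt (hα0 i))
      have h2 : ∑ i ∈ Big, (1/(2*(n:ℝ)) * (1/4)) ≤ ∑ i ∈ Big, α i * (u i)^2 :=
        Finset.sum_le_sum h1
      have h3 : ∑ i ∈ Big, α i * (u i)^2 ≤ ∑ i, α i * (u i)^2 :=
        Finset.sum_le_sum_of_subset_of_nonneg (Finset.subset_univ _)
          (fun i _ _ => mul_nonneg (le_of_lt (hα0 i)) (sq_nonneg _))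
      rw [Finset.sum_const, nsmul_eq_mul] at h2
      have h4 : (n:ℝ)/2 * (1/(2*(n:ℝ)) * (1/4)) < (Big.card : ℝ) * (1/(2*(n:ℝ)) * (1/4)) := by
        apply mul_lt_mul_of_pos_right hcard (by positivity)
      have h5 : (n:ℝ)/2 * (1/(2*(n:ℝ)) * (1/4)) = 1/16 := by
        field_simp; ring
      linarith
    have : (0:ℝ) < (p-2)/4 := by linarith
    nlinarith [hT, hMge]
  -- variance bound
  have ha_nonneg : ∀ i, 0 ≤ a i := by
    intro i
    have hdiff0 : (0:ℝ) ≤ (1+u i)^p - (1-u i)^p := by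
      have := Real.rpow_le_rpow (by linarith [hu1 i] : (0:ℝ) ≤ 1 - u i)
        (by linarith [hu0 i] : 1 - u i ≤ 1 + u i) (le_of_lt hp0)
      linarith
    simp only [ha]
    exact mul_nonneg (le_of_lt (hα0 i))
      (div_nonneg hdiff0 (by linarith [hden i]))
  have hαu : ∀ i, α i * u i ≤ c * X := by
    intro i
    have h1 : α i * u i ≤ α i * (c * X * α i ^ (-(1/p))) :=
      mul_le_mul_of_nonneg_left (hub i) (le_of_lt (hα0 i))
    have h2 : α i * (c * X * α i ^ (-(1/p))) = c * X * (α i ^ (1 - 1/p)) := by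
      rw [show (1:ℝ) - 1/p = 1 + -(1/p) by ring, Real.rpow_add (hα0 i), Real.rpow_one]
      ring
    have h3 : α i ^ (1 - 1/p) ≤ 1 :=
      Real.rpow_le_one (le_of_lt (hα0 i)) (hαle1 i) (by linarith)
    calc α i * u i ≤ c * X * (α i ^ (1 - 1/p)) := by rw [← h2]; exact h1
      _ ≤ c * X * 1 := by
          apply mul_le_mul_of_nonneg_left h3 (by positivity)
      _ = c * X := by ring
  have ha_le : ∀ i, a i ≤ K * (α i * u i) := by
    intro i
    have h1 : ((1+u i)^p - (1-u i)^p) / (2*(1+u i^p)) ≤ K * u i := by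
      simpa only [hK] using diff_upper (le_of_lt hp) (hu0 i) (hu1 i)
    calc a i = α i * (((1+u i)^p - (1-u i)^p) / (2*(1+u i^p))) := by rw [ha]
      _ ≤ α i * (K * u i) := mul_le_mul_of_nonneg_left h1 (le_of_lt (hα0 i))
      _ = K * (α i * u i) := by ring
  have hV : ∑ i, (a i)^2 ≤ K^2 * c * X := by
    have hterm : ∀ i, (a i)^2 ≤ K^2 * (c * X) * α i := by
      intro i
      have h0 : 0 ≤ α i * u i := mul_nonneg (le_of_lt (hα0 i)) (hu0 i)
      have h1 : a i ≤ K * (α i * u i) := ha_le i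
      have h2 : α i * u i ≤ c * X := hαu i
      have h3 : α i * u i ≤ α i :=
        mul_le_mul_of_nonneg_left (hu1 i) (le_of_lt (hα0 i)) |>.trans_eq (mul_one _)
      have h4 : (α i * u i)*(α i * u i) ≤ (c*X)*(α i) :=
        mul_le_mul h2 h3 h0 (by positivity)
      have h5 : a i * a i ≤ (K*(α i * u i))*(K*(α i * u i)) :=
        mul_le_mul h1 h1 (ha_nonneg i) (mul_nonneg (le_of_lt hK0) h0)
      have h6 : K^2*((α i * u i)*(α i * u i)) ≤ K^2*((c*X)*(α i)) :=
        mul_le_mul_of_nonneg_left h4 (sq_nonneg K)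
      nlinarith [h5, h6]
    calc ∑ i, (a i)^2 ≤ ∑ i, K^2 * (c * X) * α i := Finset.sum_le_sum fun i _ => hterm i
      _ = K^2 * (c * X) * ∑ i, α i := by rw [← Finset.mul_sum]
      _ = K^2 * c * X := by rw [hsum]; ring
  -- Chebyshev
  set Bbad := (Finset.univ.filter fun ε : Fin n → Bool => S ε ≤ -(θ/2)) with hBbad
  have hcheb : (θ/2)^2 * (Bbad.card : ℝ) ≤ 2^n * (K^2 * c * X) := by
    have h1 : ∀ ε ∈ Bbad, (θ/2)^2 ≤ (S ε)^2 := by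
      intro ε hε
      rw [hBbad, Finset.mem_filter] at hε
      nlinarith [hε.2, hθ]
    have h2 : ∑ ε ∈ Bbad, ((θ/2)^2 : ℝ) ≤ ∑ ε ∈ Bbad, (S ε)^2 := Finset.sum_le_sum h1
    have h3 : ∑ ε ∈ Bbad, (S ε)^2 ≤ ∑ ε : Fin n → Bool, (S ε)^2 :=
      Finset.sum_le_sum_of_subset_of_nonneg (Finset.subset_univ _) (fun ε _ _ => sq_nonneg _)
    have h4 : ∑ ε : Fin n → Bool, (S ε)^2 = 2^n * ∑ i, (a i)^2 := by
      simp only [hS]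
      exact sum_sq_signs a
    rw [Finset.sum_const, nsmul_eq_mul] at h2
    have h5 : (2:ℝ)^n * ∑ i, (a i)^2 ≤ 2^n * (K^2 * c * X) := by
      apply mul_le_mul_of_nonneg_left hV (by positivity)
    calc (θ/2)^2 * (Bbad.card : ℝ) = (Bbad.card : ℝ) * (θ/2)^2 := by ring
      _ ≤ ∑ ε ∈ Bbad, (S ε)^2 := h2
      _ ≤ ∑ ε : Fin n → Bool, (S ε)^2 := h3
      _ = 2^n * ∑ i, (a i)^2 := h4
      _ ≤ 2^n * (K^2 * c * X) := h5
  -- conclusion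
  have hP0 : (0:ℝ) < 2^n := by positivity
  set Good := (Finset.univ.filter fun ε : Fin n → Bool => ¬ (S ε ≤ -(θ/2))) with hGood
  have hsplit : (Bbad.card : ℝ) + (Good.card : ℝ) = 2^n := by
    have h := Finset.card_filter_add_card_filter_not
      (s := (Finset.univ : Finset (Fin n → Bool))) (p := fun ε => S ε ≤ -(θ/2))
    have hcu : (Finset.univ : Finset (Fin n → Bool)).card = 2^n := by
      simp [Finset.card_univ, Fintype.card_fun]
    rw [hcu] at h
    rw [hBbad, hGood]
    exact_mod_cast congrArg (Nat.cast : ℕ → ℝ) h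
  have hFnn : ∀ ε : Fin n → Bool,
      (0:ℝ) ≤ ∑ i, α i * (1 + (if ε i then (1:ℝ) else -1) * u i)^p/(1 + u i ^ p) := by
    intro ε
    apply Finset.sum_nonneg
    intro i _
    apply div_nonneg _ (le_of_lt (hden i))
    apply mul_nonneg (le_of_lt (hα0 i))
    apply Real.rpow_nonneg
    cases hεi : ε i
    · simp only [hεi, Bool.false_eq_true, if_false]
      linarith [hu1 i]
    · simp only [hεi, if_true]
      linarith [hu0 i]
  have hGoodLB : ∀ ε ∈ Good, L ≤
      (∑ i, α i * (1 + (if ε i then (1:ℝ) else -1) * u i)^p/(1 + u i ^ p)) ^ (1/p) := by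
    intro ε hε
    rw [hGood, Finset.mem_filter] at hε
    have hSε : -(θ/2) < S ε := lt_of_not_ge hε.2
    rw [hdecomp ε, hL]
    exact Real.rpow_le_rpow (by linarith) (by linarith) (le_of_lt hip)
  have hsum_lb : (Good.card : ℝ) * L ≤ ∑ ε : Fin n → Bool,
      (∑ i, α i * (1 + (if ε i then (1:ℝ) else -1) * u i)^p/(1 + u i ^ p)) ^ (1/p) := by
    calc (Good.card : ℝ) * L = ∑ _ε ∈ Good, L := by rw [Finset.sum_const, nsmul_eq_mul]
      _ ≤ ∑ ε ∈ Good, (∑ i, α i * (1 + (if ε i then (1:ℝ) else -1) * u i)^p/(1 + u i ^ p)) ^ (1/p) :=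
          Finset.sum_le_sum hGoodLB
      _ ≤ ∑ ε : Fin n → Bool, (∑ i, α i * (1 + (if ε i then (1:ℝ) else -1) * u i)^p/(1 + u i ^ p)) ^ (1/p) :=
          Finset.sum_le_sum_of_subset_of_nonneg (Finset.subset_univ _)
            (fun ε _ _ => Real.rpow_nonneg (hFnn ε) _)
  have hkey : (2:ℝ)^n < (Good.card : ℝ) * L := by
    have hβ : (Bbad.card : ℝ) ≤ 2^n * (D * X) := by
      have hDXeq : (2:ℝ)^n * (D * X) = (2^n * (K^2 * c * X)) / ((θ/2)^2) := by
        rw [hD]; field_simp; ring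
      rw [hDXeq, le_div_iff₀ (by positivity)]
      linarith [hcheb]
    have hβL : (Bbad.card : ℝ) * L < 2^n * (L - 1) := by
      have h1 : (Bbad.card : ℝ) * L ≤ 2^n * (D * X) * L :=
        mul_le_mul_of_nonneg_right hβ (le_of_lt hL0)
      have h2 : (2:ℝ)^n * (D * X) * L < 2^n * η * L := by
        apply mul_lt_mul_of_pos_right _ hL0
        exact mul_lt_mul_of_pos_left hDX hP0
      have h3 : (2:ℝ)^n * η * L = 2^n * (L - 1) := by
        have hLne : L ≠ 0 := ne_of_gt hL0
        rw [hη]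
        field_simp
      linarith
    have h4 : (Good.card : ℝ) * L = 2^n * L - (Bbad.card : ℝ) * L := by
      have : (Good.card : ℝ) = 2^n - (Bbad.card : ℝ) := by linarith [hsplit]
      rw [this]; ring
    nlinarith [h4, hβL, hP0, hL1]
  have hphi : phi p α u = (2:ℝ)^(-(n:ℝ)) * ∑ ε : Fin n → Bool,
      (∑ i, α i * (1 + (if ε i then (1:ℝ) else -1) * u i)^p/(1 + u i ^ p)) ^ (1/p) := rfl
  have h2n : (2:ℝ)^(-(n:ℝ)) = ((2:ℝ)^n)⁻¹ := by
    rw [Real.rpow_neg (by norm_num), Real.rpow_natCast]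
  calc (1:ℝ) = ((2:ℝ)^n)⁻¹ * (2^n) := (inv_mul_cancel₀ (ne_of_gt hP0)).symm
    _ < ((2:ℝ)^n)⁻¹ * ∑ ε : Fin n → Bool,
        (∑ i, α i * (1 + (if ε i then (1:ℝ) else -1) * u i)^p/(1 + u i ^ p)) ^ (1/p) := by
        apply mul_lt_mul_of_pos_left _ (by positivity)
        exact lt_of_lt_of_le hkey hsum_lb
    _ = phi p α u := by rw [hphi, h2n]
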